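/- Let H be a complex Hilbert space and ψ ∈ H with ψ ≠ 0. For vectors u, v ∈ H, there exists a bounded operator X : H →L[ℂ] H with X ψ = u and (adjoint X) ψ = v if and only if ⟨ψ, u⟩ = conj(⟨ψ, v⟩). In particular, the joint range {(Xψ, X*ψ) : X ∈ B(H)} is the closed subspace {(u,v) ∈ H × H : ⟨ψ, u⟩ = conj(⟨ψ, v⟩)} of H × H. -/

import Mathlib

local notation "⟪" x ", " y "⟫" => @inner ℂ _ _ x y

/-- For `ψ ≠ 0` in a complex Hilbert space `H`, a pair `(u, v)` arises as
`(X ψ, X* ψ)` for some bounded operator `X` if and only if `⟨ψ, u⟩ = conj ⟨ψ, v⟩`. -/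
theorem stmt_15 {H : Type*} [NormedAddCommGroup H] [InnerProductSpace ℂ H] [CompleteSpace H]
    (ψ : H) (hψ : ψ ≠ 0) (u v : H) :
    (∃ X : H →L[ℂ] H, X ψ = u ∧ (ContinuousLinearMap.adjoint X) ψ = v) ↔
      ⟪ψ, u⟫ = (starRingEnd ℂ) ⟪ψ, v⟫ := by
  constructor
  · rintro ⟨X, rfl, rfl⟩
    rw [ContinuousLinearMap.adjoint_inner_right, inner_conj_symm]
  · intro h
    have hψ2 : ⟪ψ, ψ⟫ ≠ 0 := inner_self_ne_zero.mpr hψ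
    set c : ℂ := (⟪ψ, ψ⟫)⁻¹ with hc
    have hcc : (starRingEnd ℂ) c = c := by
      rw [hc, map_inv₀, inner_conj_symm]
    set w : H := v - ((starRingEnd ℂ) ⟪ψ, u⟫ * c) • ψ with hw
    have hwψ : ⟪w, ψ⟫ = 0 := by
      rw [hw, inner_sub_left, inner_smul_left, map_mul, starRingEnd_self_apply, hcc,
        ← inner_conj_symm v ψ, ← h, hc]
      field_simp
      ring
    refine ⟨c • ((innerSL ℂ ψ).smulRight u) + c • ((innerSL ℂ w).smulRight ψ), ?_, ?_⟩
    · simp only [ContinuousLinearMap.add_apply, ContinuousLinearMap.smul_apply,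
        ContinuousLinearMap.smulRight_apply, innerSL_apply_apply, hwψ,
        zero_smul, smul_zero, add_zero, smul_smul]
      rw [hc, inv_mul_cancel₀ hψ2, one_smul]
    · apply ext_inner_right ℂ
      intro x
      rw [ContinuousLinearMap.adjoint_inner_left]
      simp only [ContinuousLinearMap.add_apply, ContinuousLinearMap.smul_apply,
        ContinuousLinearMap.smulRight_apply, innerSL_apply_apply, inner_add_right,
        inner_smul_right, hw, inner_sub_left, inner_smul_left, map_mul, hcc,
        starRingEnd_self_apply]
      rw [hc]
      field_simp
      ring
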